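/- There exist constants c, C > 0 such that for every real η ≥ 2 and every positive integer N with |N - η^{1/3}| ≤ 1, one has c · η^{-1/2} e^{3 η^{1/3}} ≤ η^N / (N!)^3 ≤ C · η^{-1/2} e^{3 η^{1/3}}. -/

import Mathlib

open Real Filter

lemma sqrt_pi_le_stirlingSeq (n : ℕ) : Real.sqrt π ≤ Stirling.stirlingSeq (n + 1) := by
  have hl : Tendsto (Stirling.stirlingSeq ∘ Nat.succ) atTop (nhds (Real.sqrt π)) :=
    Stirling.tendsto_stirlingSeq_sqrt_pi.comp (tendsto_add_atTop_nat 1)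
  exact Stirling.stirlingSeq'_antitone.le_of_tendsto hl n

lemma stirlingSeq_le (n : ℕ) : Stirling.stirlingSeq (n + 1) ≤ Real.exp 1 / Real.sqrt 2 := by
  have := Stirling.stirlingSeq'_antitone (Nat.zero_le n)
  simpa [Stirling.stirlingSeq_one] using this

lemma fact_lower (n : ℕ) :
    Real.sqrt π * (Real.sqrt (2 * n) * ((n : ℝ) / Real.exp 1) ^ n) ≤ n.factorial := by
  cases n with
  | zero => simp
  | succ m =>
    have h := sqrt_pi_le_stirlingSeq m
    rw [Stirling.stirlingSeq] at h
    rw [le_div_iff₀ (by positivity)] at h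
    push_cast at h ⊢
    linarith

lemma fact_upper (n : ℕ) (hn : 0 < n) :
    (n.factorial : ℝ) ≤ (Real.exp 1 / Real.sqrt 2) * (Real.sqrt (2 * n) * ((n : ℝ) / Real.exp 1) ^ n) := by
  obtain ⟨m, rfl⟩ := Nat.exists_eq_add_of_lt hn
  simp only [zero_add]
  have h := stirlingSeq_le m
  rw [Stirling.stirlingSeq] at h
  rw [div_le_iff₀ (by positivity)] at h
  push_cast at h ⊢
  linarith

lemma key_est (t : ℝ) (ht : 1 ≤ t) (N : ℕ) (hN : 0 < N) (hd : |(N : ℝ) - t| ≤ 1) :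
    Real.exp (-3) * (Real.sqrt t)⁻¹ * Real.exp t ≤ t ^ N / (N.factorial : ℝ) ∧
    t ^ N / (N.factorial : ℝ) ≤ (Real.sqrt t)⁻¹ * Real.exp t := by
  have ht0 : (0:ℝ) < t := by linarith
  have hNr : (1:ℝ) ≤ N := by exact_mod_cast hN
  have hNr0 : (0:ℝ) < N := by linarith
  obtain ⟨hd1, hd2⟩ := abs_le.mp hd
  have ht2N : t ≤ 2 * N := by rcases le_total t 2 with h | h <;> linarith
  have hN2t : (N:ℝ) ≤ 2 * t := by linarith
  have hfpos : (0:ℝ) < N.factorial := by exact_mod_cast N.factorial_pos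
  have hNne : (N:ℝ) ≠ 0 := ne_of_gt hNr0
  have hbase : (0:ℝ) < t * Real.exp 1 / N := by positivity
  -- upper bound on (t*e/N)^N
  have hpow_up : (t * Real.exp 1 / N) ^ N ≤ Real.exp t := by
    have h1 : t * Real.exp 1 / N ≤ Real.exp ((t - N) / N + 1) := by
      rw [Real.exp_add]
      have h2 : t / N ≤ Real.exp ((t - N) / N) := by
        have := Real.add_one_le_exp ((t - N) / N)
        have h3 : (t - N) / N + 1 = t / N := by field_simp; ring
        linarith
      calc t * Real.exp 1 / N = (t / N) * Real.exp 1 := by ring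
        _ ≤ Real.exp ((t - N) / N) * Real.exp 1 := by
            gcongr
    calc (t * Real.exp 1 / N) ^ N ≤ (Real.exp ((t - N) / N + 1)) ^ N :=
          pow_le_pow_left₀ hbase.le h1 N
      _ = Real.exp (N * ((t - N) / N + 1)) := by rw [← Real.exp_nat_mul]
      _ = Real.exp t := by
          congr 1
          field_simp
          ring
  -- lower bound on (t*e/N)^N
  have hpow_lo : Real.exp (t - 1) ≤ (t * Real.exp 1 / N) ^ N := by
    have hlog1 : 1 - (N:ℝ) / t ≤ Real.log (t / N) := by
      have h := Real.log_le_sub_one_of_pos (show (0:ℝ) < (N:ℝ) / t by positivity)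
      rw [show ((N:ℝ) / t) = (t / N)⁻¹ by rw [inv_div], Real.log_inv, inv_div] at h
      linarith
    have hlogeq : Real.log (t * Real.exp 1 / N) = Real.log (t / N) + 1 := by
      rw [show t * Real.exp 1 / N = (t / N) * Real.exp 1 by ring,
        Real.log_mul (by positivity) (Real.exp_ne_zero 1), Real.log_exp]
    have hsq : (t - N) ^ 2 ≤ 1 := by nlinarith
    have hdiv : (N:ℝ) ^ 2 / t ≤ 2 * N - t + 1 := by
      rw [div_le_iff₀ ht0]; nlinarith
    have hlog2 : t - 1 ≤ (N:ℝ) * Real.log (t * Real.exp 1 / N) := by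
      rw [hlogeq]
      have h4 : (N:ℝ) * (1 - (N:ℝ)/t + 1) ≤ (N:ℝ) * (Real.log (t / N) + 1) := by
        gcongr <;> first | exact hNr0.le | linarith
      have h5 : (N:ℝ) * (1 - (N:ℝ)/t + 1) = 2 * N - (N:ℝ)^2 / t := by ring
      linarith
    calc Real.exp (t - 1) ≤ Real.exp ((N:ℝ) * Real.log (t * Real.exp 1 / N)) :=
          Real.exp_le_exp.mpr hlog2
      _ = (Real.exp (Real.log (t * Real.exp 1 / N))) ^ N := by rw [← Real.exp_nat_mul]
      _ = (t * Real.exp 1 / N) ^ N := by rw [Real.exp_log hbase]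
  have hsqt : (0:ℝ) < Real.sqrt t := Real.sqrt_pos.mpr ht0
  have hP : (0:ℝ) < ((N:ℝ) / Real.exp 1) ^ N := by positivity
  -- factorial lower bound with √t
  have hlow_fact : Real.sqrt t * ((N:ℝ) / Real.exp 1) ^ N ≤ N.factorial := by
    refine le_trans ?_ (fact_lower N)
    have hπ : (1:ℝ) ≤ Real.sqrt π := by
      have := Real.sqrt_le_sqrt (show (1:ℝ) ≤ π by linarith [Real.pi_gt_three])
      simpa using this
    calc Real.sqrt t * ((N:ℝ) / Real.exp 1) ^ N
        ≤ Real.sqrt (2 * N) * ((N:ℝ) / Real.exp 1) ^ N := by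
          gcongr <;> first | positivity | exact Real.sqrt_le_sqrt (by linarith)
      _ = 1 * (Real.sqrt (2 * N) * ((N:ℝ) / Real.exp 1) ^ N) := by ring
      _ ≤ Real.sqrt π * (Real.sqrt (2 * N) * ((N:ℝ) / Real.exp 1) ^ N) := by
          gcongr
  -- factorial upper bound with √t
  have hup_fact : (N.factorial : ℝ) ≤
      Real.exp 1 * (Real.sqrt 2 * Real.sqrt t) * ((N:ℝ) / Real.exp 1) ^ N := by
    refine (fact_upper N hN).trans ?_
    have hsplit : Real.sqrt (2 * N) = Real.sqrt 2 * Real.sqrt N :=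
      Real.sqrt_mul (by norm_num) _
    have hsN : Real.sqrt N ≤ Real.sqrt 2 * Real.sqrt t := by
      rw [← Real.sqrt_mul (by norm_num)]
      exact Real.sqrt_le_sqrt hN2t
    have h2ne : Real.sqrt 2 ≠ 0 := by positivity
    calc Real.exp 1 / Real.sqrt 2 * (Real.sqrt (2 * N) * ((N:ℝ) / Real.exp 1) ^ N)
        = Real.exp 1 * Real.sqrt N * ((N:ℝ) / Real.exp 1) ^ N := by
          rw [hsplit]; field_simp
      _ ≤ Real.exp 1 * (Real.sqrt 2 * Real.sqrt t) * ((N:ℝ) / Real.exp 1) ^ N := by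
          gcongr
  have halg : t ^ N / (Real.sqrt t * ((N:ℝ) / Real.exp 1) ^ N)
      = (t * Real.exp 1 / N) ^ N / Real.sqrt t := by
    rw [div_pow, div_pow]
    field_simp
    rw [mul_pow, show Real.exp 1 ^ N = Real.exp N by rw [← Real.exp_nat_mul, mul_one]]
  constructor
  · -- lower bound
    have h1 : t ^ N / (Real.exp 1 * (Real.sqrt 2 * Real.sqrt t) * ((N:ℝ) / Real.exp 1) ^ N)
        ≤ t ^ N / (N.factorial : ℝ) := by
      gcongr <;> first | positivity | exact hup_fact
    refine le_trans ?_ h1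
    have halg2 : t ^ N / (Real.exp 1 * (Real.sqrt 2 * Real.sqrt t) * ((N:ℝ) / Real.exp 1) ^ N)
        = (t * Real.exp 1 / N) ^ N / (Real.exp 1 * Real.sqrt 2 * Real.sqrt t) := by
      rw [div_pow, div_pow]
      field_simp
      rw [mul_pow, show Real.exp 1 ^ N = Real.exp N by rw [← Real.exp_nat_mul, mul_one]]
      ring
    rw [halg2]
    have hs2e : Real.sqrt 2 ≤ Real.exp 1 := by
      have h2e : (2:ℝ) ≤ Real.exp 1 := by linarith [Real.add_one_le_exp 1]
      have : Real.sqrt 2 ≤ Real.sqrt 4 := Real.sqrt_le_sqrt (by norm_num)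
      have h4 : Real.sqrt 4 = 2 := by
        rw [show (4:ℝ) = 2 ^ 2 by norm_num, Real.sqrt_sq (by norm_num)]
      linarith
    have hden : Real.exp 1 * Real.sqrt 2 * Real.sqrt t ≤ Real.exp 2 * Real.sqrt t := by
      have : Real.exp 1 * Real.sqrt 2 ≤ Real.exp 1 * Real.exp 1 := by
        gcongr <;> first | positivity | exact hs2e
      rw [← Real.exp_add] at this
      norm_num at this
      nlinarith [hsqt]
    calc Real.exp (-3) * (Real.sqrt t)⁻¹ * Real.exp t
        = Real.exp (t - 1) / (Real.exp 2 * Real.sqrt t) := by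
          rw [div_eq_mul_inv, mul_inv, show Real.exp (t-1) = Real.exp t * Real.exp (-3) * Real.exp 2 by
            rw [← Real.exp_add, ← Real.exp_add]; ring_nf]
          field_simp
      _ ≤ Real.exp (t - 1) / (Real.exp 1 * Real.sqrt 2 * Real.sqrt t) := by
          gcongr <;> first | positivity | exact hden
      _ ≤ (t * Real.exp 1 / N) ^ N / (Real.exp 1 * Real.sqrt 2 * Real.sqrt t) := by
          gcongr <;> first | positivity | exact hpow_lo
  · -- upper bound
    have h1 : t ^ N / (N.factorial : ℝ) ≤ t ^ N / (Real.sqrt t * ((N:ℝ) / Real.exp 1) ^ N) := by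
      gcongr <;> first | positivity | exact hlow_fact
    refine h1.trans ?_
    rw [halg]
    calc (t * Real.exp 1 / N) ^ N / Real.sqrt t ≤ Real.exp t / Real.sqrt t := by
          gcongr <;> first | positivity | exact hpow_up
      _ = (Real.sqrt t)⁻¹ * Real.exp t := by rw [div_eq_mul_inv]; ring

theorem stmt_2 :
    ∃ c > (0:ℝ), ∃ C > (0:ℝ), ∀ η : ℝ, 2 ≤ η → ∀ N : ℕ, 0 < N →
      |(N : ℝ) - η ^ ((1:ℝ)/3)| ≤ 1 →
      c * η ^ (-(1:ℝ)/2) * Real.exp (3 * η ^ ((1:ℝ)/3)) ≤ η ^ N / (N.factorial : ℝ) ^ 3 ∧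
      η ^ N / (N.factorial : ℝ) ^ 3 ≤ C * η ^ (-(1:ℝ)/2) * Real.exp (3 * η ^ ((1:ℝ)/3)) := by
  refine ⟨Real.exp (-9), Real.exp_pos _, 1, one_pos, ?_⟩
  intro η hη N hN hd
  set t := η ^ ((1:ℝ)/3) with htdef
  have hη0 : (0:ℝ) < η := by linarith
  have ht1 : (1:ℝ) ≤ t := Real.one_le_rpow (by linarith) (by norm_num)
  have ht0 : (0:ℝ) < t := by linarith
  obtain ⟨hlo, hup⟩ := key_est t ht1 N hN hd
  have hfpos : (0:ℝ) < N.factorial := by exact_mod_cast N.factorial_pos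
  have ht3 : t ^ (3:ℕ) = η := by
    rw [htdef, ← Real.rpow_natCast (η ^ ((1:ℝ)/3)) 3, ← Real.rpow_mul hη0.le]
    norm_num
  have hcube : η ^ N / (N.factorial : ℝ) ^ 3 = (t ^ N / (N.factorial : ℝ)) ^ (3:ℕ) := by
    rw [div_pow, ← pow_mul, mul_comm, pow_mul, ht3]
  have hrpow : η ^ (-(1:ℝ)/2) = ((Real.sqrt t)⁻¹) ^ (3:ℕ) := by
    rw [Real.sqrt_eq_rpow, htdef, ← Real.rpow_mul hη0.le,
      ← Real.rpow_neg_one (η ^ ((1:ℝ)/3 * (1/2))), ← Real.rpow_mul hη0.le,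
      ← Real.rpow_natCast (η ^ (1/3 * (1/2) * -1 : ℝ)) 3, ← Real.rpow_mul hη0.le]
    norm_num
  have hexp : Real.exp (3 * t) = (Real.exp t) ^ (3:ℕ) := by
    rw [← Real.exp_nat_mul]
    norm_num
  have hA0 : (0:ℝ) ≤ Real.exp (-3) * (Real.sqrt t)⁻¹ * Real.exp t := by positivity
  constructor
  · have h9 : Real.exp (-9) = (Real.exp (-3)) ^ (3:ℕ) := by
      rw [← Real.exp_nat_mul]; norm_num
    calc Real.exp (-9) * η ^ (-(1:ℝ)/2) * Real.exp (3 * t)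
        = (Real.exp (-3) * (Real.sqrt t)⁻¹ * Real.exp t) ^ (3:ℕ) := by
          rw [h9, hrpow, hexp]; ring
      _ ≤ (t ^ N / (N.factorial : ℝ)) ^ (3:ℕ) := pow_le_pow_left₀ hA0 hlo 3
      _ = η ^ N / (N.factorial : ℝ) ^ 3 := hcube.symm
  · calc η ^ N / (N.factorial : ℝ) ^ 3
        = (t ^ N / (N.factorial : ℝ)) ^ (3:ℕ) := hcube
      _ ≤ ((Real.sqrt t)⁻¹ * Real.exp t) ^ (3:ℕ) := by
          apply pow_le_pow_left₀ (by positivity) hup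
      _ = 1 * η ^ (-(1:ℝ)/2) * Real.exp (3 * t) := by
          rw [hrpow, hexp]; ring
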